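/- Let A_1A_2A_3A_4 be a non-degenerate tetrahedron in ℝ³ with interior point A_0 such that ∠A_iA_0A_j = arccos(−1/3) for each of the five pairs (i,j) ∈ {(1,2), (1,3), (1,4), (2,3), (2,4)}. Then also ∠A_3A_0A_4 = arccos(−1/3); and if B̄_1, B̄_2, B̄_3, B̄_4 > 0 satisfy B̄_1 + B̄_2 + B̄_3 + B̄_4 = 1 and B̄_1 + B̄_2 + B̄_3 = B̄_4 + 1/2, and A_0 minimizes X ↦ Σ_{i=1}^4 B̄_i‖X − A_i‖, then B̄_1 = B̄_2 = B̄_3 = B̄_4 = 1/4. -/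

import Mathlib

open EuclideanGeometry

local notation "⟪" x ", " y "⟫" => @inner ℝ _ _ x y

lemma extract_inner {p q A₀ : EuclideanSpace ℝ (Fin 3)}
    (h : ∠ p A₀ q = Real.arccos (-(1/3))) :
    ‖p - A₀‖ ≠ 0 ∧ ‖q - A₀‖ ≠ 0 ∧
      ⟪p - A₀, q - A₀⟫ = -(1/3) * (‖p - A₀‖ * ‖q - A₀‖) := by
  have hc : Real.cos (∠ p A₀ q) = -(1/3) := by
    rw [h, Real.cos_arccos (by norm_num) (by norm_num)]
  rw [EuclideanGeometry.angle, InnerProductGeometry.cos_angle] at hc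
  simp only [vsub_eq_sub] at hc
  have hp : ‖p - A₀‖ ≠ 0 := by
    intro h0; rw [norm_eq_zero] at h0; simp [h0] at hc
  have hq : ‖q - A₀‖ ≠ 0 := by
    intro h0; rw [norm_eq_zero] at h0; simp [h0] at hc
  rw [div_eq_iff (mul_ne_zero hp hq)] at hc
  exact ⟨hp, hq, hc⟩

set_option maxHeartbeats 2000000 in
/-- For a tetrahedron `A₁A₂A₃A₄` with interior point `A₀` at which five of the six
angles `∠AᵢA₀Aⱼ` equal `arccos(−1/3)`, the sixth angle `∠A₃A₀A₄` also equals
`arccos(−1/3)`; and if positive weights satisfy `∑ B̄ᵢ = 1`,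
`B̄₁+B̄₂+B̄₃ = B̄₄ + 1/2` and `A₀` minimizes `X ↦ ∑ B̄ᵢ‖X − Aᵢ‖`, then all the
weights equal `1/4`. Indices are shifted: `A 0, …, A 3` are `A₁, …, A₄`. -/
theorem mixed_inverse_regular_tetrahedron
    (A : Fin 4 → EuclideanSpace ℝ (Fin 3))
    (hA : AffineIndependent ℝ A)
    (A₀ : EuclideanSpace ℝ (Fin 3))
    (hA₀ : A₀ ∈ interior (convexHull ℝ (Set.range A)))
    (h12 : ∠ (A 0) A₀ (A 1) = Real.arccos (-(1/3)))
    (h13 : ∠ (A 0) A₀ (A 2) = Real.arccos (-(1/3)))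
    (h14 : ∠ (A 0) A₀ (A 3) = Real.arccos (-(1/3)))
    (h23 : ∠ (A 1) A₀ (A 2) = Real.arccos (-(1/3)))
    (h24 : ∠ (A 1) A₀ (A 3) = Real.arccos (-(1/3))) :
    ∠ (A 2) A₀ (A 3) = Real.arccos (-(1/3)) ∧
    ∀ B : Fin 4 → ℝ, (∀ i, 0 < B i) →
      B 0 + B 1 + B 2 + B 3 = 1 →
      B 0 + B 1 + B 2 = B 3 + 1/2 →
      (∀ X : EuclideanSpace ℝ (Fin 3),
        ∑ i, B i * ‖A₀ - A i‖ ≤ ∑ i, B i * ‖X - A i‖) →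
      ∀ i, B i = 1/4 := by
  classical
  obtain ⟨e0, e1, i01⟩ := extract_inner h12
  obtain ⟨-, e2, i02⟩ := extract_inner h13
  obtain ⟨-, e3, i03⟩ := extract_inner h14
  obtain ⟨-, -, i12⟩ := extract_inner h23
  obtain ⟨-, -, i13⟩ := extract_inner h24
  have hd : ∀ i : Fin 4, ‖A i - A₀‖ ≠ 0 := by
    intro i; fin_cases i <;> first | exact e0 | exact e1 | exact e2 | exact e3
  have hdpos : ∀ i : Fin 4, 0 < ‖A i - A₀‖ :=
    fun i => lt_of_le_of_ne (norm_nonneg _) (Ne.symm (hd i))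
  set u : Fin 4 → EuclideanSpace ℝ (Fin 3) :=
    fun i => (‖A i - A₀‖)⁻¹ • (A i - A₀) with hu_def
  have hvu : ∀ i, A i - A₀ = ‖A i - A₀‖ • u i := by
    intro i; rw [hu_def]; dsimp only; rw [smul_inv_smul₀ (hd i)]
  have hn1 : ∀ i, ‖u i‖ = 1 := by
    intro i; rw [hu_def]; dsimp only
    rw [norm_smul, norm_inv, norm_norm, inv_mul_cancel₀ (hd i)]
  have hn : ∀ i, ⟪u i, u i⟫ = 1 := by
    intro i; rw [real_inner_self_eq_norm_mul_norm, hn1 i]; norm_num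
  have key : ∀ i j : Fin 4,
      ⟪A i - A₀, A j - A₀⟫ = -(1/3) * (‖A i - A₀‖ * ‖A j - A₀‖) →
      ⟪u i, u j⟫ = -(1/3) := by
    intro i j hij
    rw [hu_def]; dsimp only
    rw [real_inner_smul_left, real_inner_smul_right, hij]
    field_simp [hd i, hd j]
  have t01 := key 0 1 i01
  have t02 := key 0 2 i02
  have t03 := key 0 3 i03
  have t12 := key 1 2 i12
  have t13 := key 1 3 i13
  have t10 : ⟪u 1, u 0⟫ = -(1/3) := by rw [real_inner_comm]; exact t01
  have t20 : ⟪u 2, u 0⟫ = -(1/3) := by rw [real_inner_comm]; exact t02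
  have t30 : ⟪u 3, u 0⟫ = -(1/3) := by rw [real_inner_comm]; exact t03
  have t21 : ⟪u 2, u 1⟫ = -(1/3) := by rw [real_inner_comm]; exact t12
  have t31 : ⟪u 3, u 1⟫ = -(1/3) := by rw [real_inner_comm]; exact t13
  -- convex hull representation
  have hlam : ∃ lam : Fin 4 → ℝ, (∀ i, 0 ≤ lam i) ∧ ∑ i, lam i = 1 ∧
      ∑ i, lam i • (A i - A₀) = 0 := by
    have hch := interior_subset hA₀
    rw [convexHull_range_eq_exists_affineCombination] at hch
    obtain ⟨s, w, hw0, hw1, hwA⟩ := hch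
    have hzero : ∑ i ∈ s, w i • (A i - A₀) = 0 := by
      have h2 := s.affineCombination_eq_weightedVSubOfPoint_vadd_of_sum_eq_one w A hw1 A₀
      rw [hwA, Finset.weightedVSubOfPoint_apply] at h2
      simp only [vsub_eq_sub, vadd_eq_add] at h2
      have h3 := h2.symm
      rwa [add_eq_right] at h3
    refine ⟨fun i => if i ∈ s then w i else 0, ?_, ?_, ?_⟩
    · intro i; dsimp only; split
      · exact hw0 i ‹_›
      · exact le_refl _
    · dsimp only; rw [Finset.sum_ite_mem, Finset.univ_inter]; exact hw1
    · dsimp only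
      rw [← hzero, ← Finset.sum_subset (Finset.subset_univ s)
        (fun i _ hi => by simp [if_neg hi])]
      apply Finset.sum_congr rfl
      intro i hi
      rw [if_pos hi]
  obtain ⟨lam, hlam0, hlam1, hlamv⟩ := hlam
  -- u 2 ≠ u 3
  have hne : u 2 ≠ u 3 := by
    intro heq
    have hcu : ∑ i, (lam i * ‖A i - A₀‖) • u i = 0 := by
      rw [← hlamv]
      apply Finset.sum_congr rfl
      intro i _
      conv_rhs => rw [hvu i, smul_smul]
    rw [Fin.sum_univ_four, ← heq] at hcu
    have E0 := congrArg (fun x => ⟪x, u 0⟫) hcu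
    have E1 := congrArg (fun x => ⟪x, u 1⟫) hcu
    have E2 := congrArg (fun x => ⟪x, u 2⟫) hcu
    simp only [inner_add_left, real_inner_smul_left, inner_zero_left, hn,
      t01, t10, t02, t20, t12, t21, mul_one] at E0 E1 E2
    have h0 := mul_nonneg (hlam0 0) (norm_nonneg (A 0 - A₀))
    have h1 := mul_nonneg (hlam0 1) (norm_nonneg (A 1 - A₀))
    have h2 := mul_nonneg (hlam0 2) (norm_nonneg (A 2 - A₀))
    have h3 := mul_nonneg (hlam0 3) (norm_nonneg (A 3 - A₀))
    have hz : ∀ i : Fin 4, lam i * ‖A i - A₀‖ = 0 → lam i = 0 := fun i h =>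
      (mul_eq_zero.1 h).resolve_right (hd i)
    have hl0 : lam 0 = 0 := hz 0 (by linarith)
    have hl1 : lam 1 = 0 := hz 1 (by linarith)
    have hl2 : lam 2 = 0 := hz 2 (by linarith)
    have hl3 : lam 3 = 0 := hz 3 (by linarith)
    rw [Fin.sum_univ_four, hl0, hl1, hl2, hl3] at hlam1
    norm_num at hlam1
  -- the sixth inner product
  have t23 : ⟪u 2, u 3⟫ = -(1/3) := by
    have hli : LinearIndependent ℝ ![u 0, u 1] := by
      rw [LinearIndependent.pair_iff]
      intro a b hab
      have h1 := congrArg (fun x => ⟪x, u 0⟫) hab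
      have h2 := congrArg (fun x => ⟪x, u 1⟫) hab
      simp only [inner_add_left, real_inner_smul_left, inner_zero_left, hn,
        t01, t10, mul_one] at h1 h2
      constructor <;> linarith
    have hKo : Module.finrank ℝ (Submodule.span ℝ (Set.range ![u 0, u 1]))ᗮ = 1 := by
      have hK : Module.finrank ℝ (Submodule.span ℝ (Set.range ![u 0, u 1])) = 2 := by
        rw [finrank_span_eq_card hli]; simp
      have hsum := Submodule.finrank_add_finrank_orthogonal
        (K := Submodule.span ℝ (Set.range ![u 0, u 1]))
      rw [hK, finrank_euclideanSpace_fin] at hsum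
      omega
    set W2 := u 2 + (1/2 : ℝ) • (u 0 + u 1) with hW2
    set W3 := u 3 + (1/2 : ℝ) • (u 0 + u 1) with hW3
    have hmemK : ∀ w : EuclideanSpace ℝ (Fin 3), ⟪u 0, w⟫ = 0 → ⟪u 1, w⟫ = 0 →
        w ∈ (Submodule.span ℝ (Set.range ![u 0, u 1]))ᗮ := by
      intro w hw0 hw1
      rw [Submodule.mem_orthogonal]
      intro x hx
      induction hx using Submodule.span_induction with
      | mem x hx =>
        obtain ⟨i, rfl⟩ := hx
        fin_cases i
        · exact hw0
        · exact hw1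
      | zero => exact inner_zero_left w
      | add x y _ _ hx hy => rw [inner_add_left, hx, hy]; ring
      | smul a x _ hx => rw [real_inner_smul_left, hx]; ring
    have hW2K : W2 ∈ (Submodule.span ℝ (Set.range ![u 0, u 1]))ᗮ := by
      apply hmemK <;>
      · simp only [hW2, inner_add_right, real_inner_smul_right, hn, t01, t10, t02, t12]
        norm_num
    have hW3K : W3 ∈ (Submodule.span ℝ (Set.range ![u 0, u 1]))ᗮ := by
      apply hmemK <;>
      · simp only [hW3, inner_add_right, real_inner_smul_right, hn, t01, t10, t03, t13]
        norm_num
    have hW22 : ⟪W2, W2⟫ = 2/3 := by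
      simp only [hW2, inner_add_left, inner_add_right, real_inner_smul_left,
        real_inner_smul_right, hn, t01, t10, t02, t20, t12, t21]
      norm_num
    have hW33 : ⟪W3, W3⟫ = 2/3 := by
      simp only [hW3, inner_add_left, inner_add_right, real_inner_smul_left,
        real_inner_smul_right, hn, t01, t10, t03, t30, t13, t31]
      norm_num
    have hW2ne : W2 ≠ 0 := by
      intro h0
      rw [h0, inner_zero_left] at hW22
      norm_num at hW22
    -- W3 = c • W2
    have hc : ∃ c : ℝ, W3 = c • W2 := by
      have hle : Submodule.span ℝ {W2} ≤ (Submodule.span ℝ (Set.range ![u 0, u 1]))ᗮ := by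
        rw [Submodule.span_le, Set.singleton_subset_iff]; exact hW2K
      have heq : Submodule.span ℝ {W2} = (Submodule.span ℝ (Set.range ![u 0, u 1]))ᗮ := by
        apply Submodule.eq_of_le_of_finrank_eq hle
        rw [finrank_span_singleton hW2ne, hKo]
      rw [← heq] at hW3K
      obtain ⟨c, hc⟩ := Submodule.mem_span_singleton.1 hW3K
      exact ⟨c, hc.symm⟩
    obtain ⟨c, hc⟩ := hc
    have hc2 : c = 1 ∨ c = -1 := by
      have h33 : ⟪W3, W3⟫ = c * (c * ⟪W2, W2⟫) := by
        rw [hc, real_inner_smul_left, real_inner_smul_right]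
      rw [hW33, hW22] at h33
      have : (c - 1) * (c + 1) = 0 := by nlinarith
      rcases mul_eq_zero.1 this with h | h
      · left; linarith
      · right; linarith
    rcases hc2 with rfl | rfl
    · exfalso
      rw [one_smul] at hc
      rw [hW3, hW2] at hc
      exact hne (add_right_cancel hc).symm
    · have hu3 : u 3 = -(u 0) - u 1 - u 2 := by
        have h' : u 3 + (1/2 : ℝ) • (u 0 + u 1) =
            (-1 : ℝ) • (u 2 + (1/2 : ℝ) • (u 0 + u 1)) := by rw [← hW2, ← hW3]; exact hc
        have h'' := eq_sub_of_add_eq h'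
        rw [h'']
        module
      rw [hu3]
      simp only [inner_sub_right, inner_neg_right, hn, t20, t21]
      norm_num
  have t32 : ⟪u 3, u 2⟫ = -(1/3) := by rw [real_inner_comm]; exact t23
  constructor
  · -- the angle
    apply Real.injOn_cos ⟨angle_nonneg _ _ _, angle_le_pi _ _ _⟩
      ⟨Real.arccos_nonneg _, Real.arccos_le_pi _⟩
    rw [Real.cos_arccos (by norm_num) (by norm_num)]
    rw [EuclideanGeometry.angle, InnerProductGeometry.cos_angle]
    simp only [vsub_eq_sub]
    have hi23 : ⟪A 2 - A₀, A 3 - A₀⟫ = -(1/3) * (‖A 2 - A₀‖ * ‖A 3 - A₀‖) := by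
      conv_lhs => rw [hvu 2, hvu 3]
      rw [real_inner_smul_left, real_inner_smul_right, t23]
      ring
    rw [hi23, mul_div_assoc, div_self (mul_ne_zero (hd 2) (hd 3)), mul_one]
  · -- the weights
    intro B hBpos hsum1 hflow hmin
    set s := B 0 • u 0 + B 1 • u 1 + B 2 • u 2 + B 3 • u 3 with hs_def
    have hus : ∀ i : Fin 4, ⟪s, A i - A₀⟫ = ‖A i - A₀‖ * ⟪u i, s⟫ := by
      intro i
      rw [real_inner_comm]
      conv_lhs => rw [hvu i]
      rw [real_inner_smul_left]
    have hss : ⟪s, s⟫ = B 0 * ⟪u 0, s⟫ + B 1 * ⟪u 1, s⟫ + B 2 * ⟪u 2, s⟫ + B 3 * ⟪u 3, s⟫ := by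
      nth_rewrite 1 [hs_def]
      simp only [inner_add_left, real_inner_smul_left]
    have hSnn : (0:ℝ) ≤ ⟪s, s⟫ := real_inner_self_nonneg
    set C := B 0 / (2*‖A 0 - A₀‖) + B 1 / (2*‖A 1 - A₀‖) + B 2 / (2*‖A 2 - A₀‖)
      + B 3 / (2*‖A 3 - A₀‖) with hC_def
    have hCpos : 0 < C := by
      rw [hC_def]
      have := hdpos 0; have := hdpos 1; have := hdpos 2; have := hdpos 3
      have q0 : 0 < B 0 / (2*‖A 0 - A₀‖) := div_pos (hBpos 0) (by linarith)
      have q1 : 0 < B 1 / (2*‖A 1 - A₀‖) := div_pos (hBpos 1) (by linarith)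
      have q2 : 0 < B 2 / (2*‖A 2 - A₀‖) := div_pos (hBpos 2) (by linarith)
      have q3 : 0 < B 3 / (2*‖A 3 - A₀‖) := div_pos (hBpos 3) (by linarith)
      linarith
    set t := 1/(2*C+1) with ht_def
    have htpos : 0 < t := by rw [ht_def]; positivity
    have hb : ∀ i : Fin 4, ‖(A₀ + t • s) - A i‖ ≤
        ‖A i - A₀‖ - t * ⟪u i, s⟫ + t^2 * ⟪s, s⟫ / (2*‖A i - A₀‖) := by
      intro i
      have hdp := hdpos i
      have hXi : (A₀ + t • s) - A i = t • s - (A i - A₀) := by abel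
      have hts : ‖t • s‖^2 = t^2 * ⟪s, s⟫ := by
        rw [norm_smul, mul_pow, real_inner_self_eq_norm_sq]
        simp [sq_abs]
      have ha2 : ‖(A₀ + t • s) - A i‖^2 =
          t^2 * ⟪s, s⟫ - 2*t*(‖A i - A₀‖ * ⟪u i, s⟫) + ‖A i - A₀‖^2 := by
        rw [hXi, norm_sub_sq_real, hts, real_inner_smul_left, hus i]
        ring
      have h2 : ‖(A₀ + t • s) - A i‖ - (‖A i - A₀‖ - t * ⟪u i, s⟫) ≤
          t^2 * ⟪s, s⟫ / (2*‖A i - A₀‖) := by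
        rw [le_div_iff₀ (by linarith : (0:ℝ) < 2*‖A i - A₀‖)]
        nlinarith [sq_nonneg (‖(A₀ + t • s) - A i‖ - ‖A i - A₀‖)]
      linarith
    have hmin' := hmin (A₀ + t • s)
    rw [Fin.sum_univ_four, Fin.sum_univ_four] at hmin'
    rw [norm_sub_rev A₀ (A 0), norm_sub_rev A₀ (A 1), norm_sub_rev A₀ (A 2),
      norm_sub_rev A₀ (A 3)] at hmin'
    have m : ∀ i : Fin 4, B i * ‖(A₀ + t • s) - A i‖ ≤
        B i * ‖A i - A₀‖ - t * (B i * ⟪u i, s⟫) + t^2 * ⟪s, s⟫ * (B i / (2*‖A i - A₀‖)) := by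
      intro i
      calc B i * ‖(A₀ + t • s) - A i‖
          ≤ B i * (‖A i - A₀‖ - t * ⟪u i, s⟫ + t^2 * ⟪s, s⟫ / (2*‖A i - A₀‖)) :=
            mul_le_mul_of_nonneg_left (hb i) (hBpos i).le
        _ = _ := by ring
    have hfinal : t * ⟪s, s⟫ ≤ t^2 * ⟪s, s⟫ * C := by
      have m0 := m 0; have m1 := m 1; have m2 := m 2; have m3 := m 3
      have hss' : t * ⟪s, s⟫ = t * (B 0 * ⟪u 0, s⟫) + t * (B 1 * ⟪u 1, s⟫)
          + t * (B 2 * ⟪u 2, s⟫) + t * (B 3 * ⟪u 3, s⟫) := by rw [hss]; ring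
      rw [hC_def]
      linarith [hmin', m0, m1, m2, m3, hss']
    have hS0 : ⟪s, s⟫ = 0 := by
      by_contra hS
      have hSpos : 0 < ⟪s, s⟫ := lt_of_le_of_ne hSnn (Ne.symm hS)
      have ht1 : t * (2*C+1) = 1 := by
        rw [ht_def]; field_simp
      have htC : t * C < 1 := by nlinarith
      have h2 : t^2 * ⟪s, s⟫ * C = (t * ⟪s, s⟫) * (t * C) := by ring
      have h3 : (t * ⟪s, s⟫) * (t * C) < (t * ⟪s, s⟫) * 1 :=
        mul_lt_mul_of_pos_left htC (mul_pos htpos hSpos)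
      rw [h2] at hfinal
      nlinarith
    have hs0 : s = 0 := by rwa [inner_self_eq_zero] at hS0
    have E : ∀ j : Fin 4, B 0 * ⟪u 0, u j⟫ + B 1 * ⟪u 1, u j⟫ + B 2 * ⟪u 2, u j⟫
        + B 3 * ⟪u 3, u j⟫ = 0 := by
      intro j
      have h := congrArg (fun x => ⟪x, u j⟫) (hs_def.symm.trans hs0)
      simpa only [inner_add_left, real_inner_smul_left, inner_zero_left] using h
    have E0 := E 0; have E1 := E 1; have E2 := E 2; have E3 := E 3
    simp only [hn, t01, t10, t02, t20, t03, t30, t12, t21, t13, t31, t23, t32,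
      mul_one] at E0 E1 E2 E3
    intro i
    fin_cases i
    · show B 0 = 1/4; linarith
    · show B 1 = 1/4; linarith
    · show B 2 = 1/4; linarith
    · show B 3 = 1/4; linarith
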